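/- Let A¹ and A² be nonempty finite sets, R¹ ∈ ℝ^{A¹×A²}, R² ∈ ℝ^{A²×A¹}, τ¹, τ² ≥ 0, and λ > 1. Define c := λ·‖R¹ + (R²)ᵀ‖_max − ( val̄¹(R¹) + val̄²(R²) ). Then c ≥ (λ − 1)·‖R¹ + (R²)ᵀ‖_max ≥ 0, and c = 0 if and only if ‖R¹ + (R²)ᵀ‖_max = 0 (i.e., if and only if the game is zero-sum). -/

import Mathlib

open Finset

noncomputable instance stdSimplexNonempty {A : Type*} [Fintype A] [Nonempty A] :
    Nonempty (stdSimplex ℝ A) := by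
  classical
  exact ⟨⟨Pi.single (Classical.arbitrary A) 1, single_mem_stdSimplex ℝ _⟩⟩

/-- Expected payoff `μᵀ R ν` of the matrix game `R` under mixed strategies `μ, ν`. -/
noncomputable def pay {A B : Type*} [Fintype A] [Fintype B]
    (R : A → B → ℝ) (μ : A → ℝ) (ν : B → ℝ) : ℝ :=
  ∑ a, ∑ b, μ a * R a b * ν b

/-- Shannon entropy `H(μ) = -∑ μ(a) log μ(a)` (note `Real.log 0 = 0` in Mathlib). -/
noncomputable def entropy {A : Type*} [Fintype A] (μ : A → ℝ) : ℝ :=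
  -∑ a, μ a * Real.log (μ a)

/-- The zero-sum matrix-game value `val(R) = max_{μ∈Δ(A)} min_{ν∈Δ(B)} μᵀ R ν`. -/
noncomputable def matVal {A B : Type*} [Fintype A] [Fintype B] [Nonempty A] [Nonempty B]
    (R : A → B → ℝ) : ℝ :=
  ⨆ μ : stdSimplex ℝ A, ⨅ ν : stdSimplex ℝ B, pay R μ.1 ν.1

/-- The entropy-regularized value
`val̄(R) = max_{μ∈Δ(A)} min_{ν∈Δ(B)} { μᵀ R ν + τ₁ H(μ) - τ₂ H(ν) }`. -/
noncomputable def regVal {A B : Type*} [Fintype A] [Fintype B] [Nonempty A] [Nonempty B]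
    (τ1 τ2 : ℝ) (R : A → B → ℝ) : ℝ :=
  ⨆ μ : stdSimplex ℝ A, ⨅ ν : stdSimplex ℝ B,
    pay R μ.1 ν.1 + τ1 * entropy μ.1 - τ2 * entropy ν.1

/-- Softmax (smoothed best response) with temperature `τ`. -/
noncomputable def softmax {A : Type*} [Fintype A] (τ : ℝ) (q : A → ℝ) : A → ℝ :=
  fun a => Real.exp (q a / τ) / ∑ b, Real.exp (q b / τ)

/-- Maximum norm of a matrix: the maximum of the absolute values of its entries. -/
noncomputable def matMaxNorm {A B : Type*} [Fintype A] [Fintype B] [Nonempty A] [Nonempty B]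
    (M : A → B → ℝ) : ℝ :=
  (Finset.univ (α := A × B)).sup' univ_nonempty (fun ab => |M ab.1 ab.2|)

/-- Sup norm of a vector. -/
noncomputable def vecSupNorm {A : Type*} [Fintype A] [Nonempty A] (q : A → ℝ) : ℝ :=
  Finset.univ.sup' univ_nonempty (fun a => |q a|)


private lemma chord {g : ℝ → ℝ} (hg : ConvexOn ℝ (Set.Icc 0 1) g) {t : ℝ}
    (ht : t ∈ Set.Icc (0:ℝ) 1) : g t ≤ (1 - t) * g 0 + t * g 1 := by
  have h := hg.2 (Set.left_mem_Icc.mpr zero_le_one) (Set.right_mem_Icc.mpr zero_le_one)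
    (by linarith [ht.2] : (0:ℝ) ≤ 1 - t) ht.1 (by ring)
  simpa [smul_eq_mul] using h

private lemma convex_push {g : ℝ → ℝ} {c u v w : ℝ} (hg : ConvexOn ℝ (Set.Icc 0 1) g)
    (hu : 0 ≤ u) (huv : u ≤ v) (hvw : v ≤ w) (hw : w ≤ 1)
    (hgu : g u < c) (hgv : c ≤ g v) : c ≤ g w := by
  by_contra hgw
  push_neg at hgw
  rcases eq_or_lt_of_le huv with rfl | huv
  · exact absurd hgv (not_le.mpr hgu)
  have hwu : (0:ℝ) < w - u := by linarith
  have ha : (0:ℝ) ≤ (w - v)/(w - u) := div_nonneg (by linarith) hwu.le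
  have hb : (0:ℝ) < (v - u)/(w - u) := div_pos (by linarith) hwu
  have hab : (w - v)/(w - u) + (v - u)/(w - u) = 1 := by
    rw [← add_div, div_eq_one_iff_eq hwu.ne']; ring
  have h := hg.2 (Set.mem_Icc.mpr ⟨hu, by linarith⟩) (Set.mem_Icc.mpr ⟨by linarith, hw⟩)
    ha hb.le hab
  have hcomb : ((w - v)/(w - u)) • u + ((v - u)/(w - u)) • w = v := by
    rw [smul_eq_mul, smul_eq_mul, div_mul_eq_mul_div, div_mul_eq_mul_div, ← add_div,
      div_eq_iff hwu.ne']
    ring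
  rw [hcomb] at h
  simp only [smul_eq_mul] at h
  have habc : (w - v)/(w - u)*c + (v - u)/(w - u)*c = c := by rw [← add_mul, hab, one_mul]
  linarith [mul_le_mul_of_nonneg_left hgu.le ha, mul_lt_mul_of_pos_left hgw hb]

private lemma convex_push' {g : ℝ → ℝ} {c u v w : ℝ} (hg : ConvexOn ℝ (Set.Icc 0 1) g)
    (hu : 0 ≤ u) (huv : u ≤ v) (hvw : v ≤ w) (hw : w ≤ 1)
    (hgw : g w < c) (hgv : c ≤ g v) : c ≤ g u := by
  by_contra hgu
  push_neg at hgu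
  rcases eq_or_lt_of_le hvw with rfl | hvw
  · exact absurd hgv (not_le.mpr hgw)
  have hwu : (0:ℝ) < w - u := by linarith
  have ha : (0:ℝ) < (w - v)/(w - u) := div_pos (by linarith) hwu
  have hb : (0:ℝ) ≤ (v - u)/(w - u) := div_nonneg (by linarith) hwu.le
  have hab : (w - v)/(w - u) + (v - u)/(w - u) = 1 := by
    rw [← add_div, div_eq_one_iff_eq hwu.ne']; ring
  have h := hg.2 (Set.mem_Icc.mpr ⟨hu, by linarith⟩) (Set.mem_Icc.mpr ⟨by linarith, hw⟩)
    ha.le hb hab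
  have hcomb : ((w - v)/(w - u)) • u + ((v - u)/(w - u)) • w = v := by
    rw [smul_eq_mul, smul_eq_mul, div_mul_eq_mul_div, div_mul_eq_mul_div, ← add_div,
      div_eq_iff hwu.ne']
    ring
  rw [hcomb] at h
  simp only [smul_eq_mul] at h
  have habc : (w - v)/(w - u)*c + (v - u)/(w - u)*c = c := by rw [← add_mul, hab, one_mul]
  linarith [mul_lt_mul_of_pos_left hgu ha, mul_le_mul_of_nonneg_left hgw.le hb]

private lemma kneser_pair {n : Type*} [Fintype n] {X : Set (n → ℝ)} {c : ℝ}
    (hXc : IsCompact X) (f : (n → ℝ) → ℝ → ℝ)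
    (hcont : Continuous fun p : (n → ℝ) × ℝ => f p.1 p.2)
    (hconc : ∀ t ∈ Set.Icc (0:ℝ) 1, Convex ℝ {x | x ∈ X ∧ c ≤ f x t})
    (hconv : ∀ x ∈ X, ConvexOn ℝ (Set.Icc (0:ℝ) 1) (f x))
    (hyp : ∀ x ∈ X, f x 0 < c ∨ f x 1 < c) :
    ∃ t ∈ Set.Icc (0:ℝ) 1, ∀ x ∈ X, f x t < c := by
  by_contra hcon
  push_neg at hcon
  have hcx : ∀ t : ℝ, Continuous fun x => f x t := fun t =>
    hcont.comp (continuous_id.prodMk continuous_const)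
  obtain ⟨xm, hxmX, hxmc⟩ := hcon 0 ⟨le_refl 0, zero_le_one⟩
  have hXne : X.Nonempty := ⟨xm, hxmX⟩
  obtain ⟨x0, hx0X, hx0max⟩ := hXc.exists_isMaxOn hXne
    (((hcx 0).min (hcx 1)).continuousOn)
  set β := (min (f x0 0) (f x0 1) + c)/2 with hβdef
  have hx0c : min (f x0 0) (f x0 1) < c := by
    rcases hyp x0 hx0X with h | h
    · exact lt_of_le_of_lt (min_le_left _ _) h
    · exact lt_of_le_of_lt (min_le_right _ _) h
  have hβc : β < c := by rw [hβdef]; linarith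
  have hminβ : ∀ x ∈ X, min (f x 0) (f x 1) < β := by
    intro x hx
    have := hx0max hx
    simp only [Set.mem_setOf_eq] at this
    rw [hβdef]; exact lt_of_le_of_lt this (by linarith)
  -- dichotomy via connectedness
  have key : ∀ t ∈ Set.Icc (0:ℝ) 1,
      (∀ x, x ∈ X → c ≤ f x t → f x 0 < β) ∨ (∀ x, x ∈ X → c ≤ f x t → f x 1 < β) := by
    intro t ht
    by_contra hk
    push_neg at hk
    obtain ⟨⟨x1, hx1X, hx1c, hx1β⟩, ⟨x2, hx2X, hx2c, hx2β⟩⟩ := hk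
    have hCpre : IsPreconnected {x | x ∈ X ∧ c ≤ f x t} := (hconc t ht).isPreconnected
    have hunion : {x | x ∈ X ∧ c ≤ f x t} ⊆ {x | f x 0 < β} ∪ {x | f x 1 < β} := by
      rintro x ⟨hxX, -⟩
      rcases min_lt_iff.mp (hminβ x hxX) with h | h
      · exact Or.inl h
      · exact Or.inr h
    have h1 : ({x | x ∈ X ∧ c ≤ f x t} ∩ {x | f x 0 < β}).Nonempty := by
      refine ⟨x2, ⟨hx2X, hx2c⟩, ?_⟩
      rcases min_lt_iff.mp (hminβ x2 hx2X) with h | h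
      · exact h
      · exact absurd h (not_lt.mpr hx2β)
    have h2 : ({x | x ∈ X ∧ c ≤ f x t} ∩ {x | f x 1 < β}).Nonempty := by
      refine ⟨x1, ⟨hx1X, hx1c⟩, ?_⟩
      rcases min_lt_iff.mp (hminβ x1 hx1X) with h | h
      · exact absurd h (not_lt.mpr hx1β)
      · exact h
    obtain ⟨x, ⟨hxX, hxc⟩, hx0β, hx1β⟩ := hCpre _ _
      (isOpen_lt (hcx 0) continuous_const) (isOpen_lt (hcx 1) continuous_const)
      hunion h1 h2
    have := chord (hconv x hxX) ht
    simp only [Set.mem_setOf_eq] at hx0β hx1β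
    nlinarith [ht.1, ht.2]
  -- the two half-intervals
  set T0 := {t : ℝ | t ∈ Set.Icc (0:ℝ) 1 ∧ ∃ x, x ∈ X ∧ c ≤ f x t ∧ f x 1 < β} with hT0def
  set T1 := {t : ℝ | t ∈ Set.Icc (0:ℝ) 1 ∧ ∃ x, x ∈ X ∧ c ≤ f x t ∧ f x 0 < β} with hT1def
  have hcover : ∀ t ∈ Set.Icc (0:ℝ) 1, t ∈ T0 ∨ t ∈ T1 := by
    intro t ht
    obtain ⟨x, hxX, hxc⟩ := hcon t ht
    rcases min_lt_iff.mp (hminβ x hxX) with h | h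
    · exact Or.inr ⟨ht, x, hxX, hxc, h⟩
    · exact Or.inl ⟨ht, x, hxX, hxc, h⟩
  have hdisjT : ∀ t, t ∈ T0 → t ∈ T1 → False := by
    rintro t ⟨ht, x0', hx0'X, hx0'c, hx0'1⟩ ⟨-, x1', hx1'X, hx1'c, hx1'0⟩
    rcases key t ht with hk | hk
    · have h0 := hk x0' hx0'X hx0'c
      have := chord (hconv x0' hx0'X) ht
      nlinarith [ht.1, ht.2]
    · have h1 := hk x1' hx1'X hx1'c
      have := chord (hconv x1' hx1'X) ht
      nlinarith [ht.1, ht.2]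
  have h0T0 : 0 ∈ T0 := by
    refine ⟨⟨le_refl _, zero_le_one⟩, xm, hxmX, hxmc, ?_⟩
    rcases min_lt_iff.mp (hminβ xm hxmX) with h | h
    · linarith
    · exact h
  have h1T1 : 1 ∈ T1 := by
    obtain ⟨x, hxX, hxc⟩ := hcon 1 ⟨zero_le_one, le_refl _⟩
    refine ⟨⟨zero_le_one, le_refl _⟩, x, hxX, hxc, ?_⟩
    rcases min_lt_iff.mp (hminβ x hxX) with h | h
    · exact h
    · linarith
  have hT0ne : T0.Nonempty := ⟨0, h0T0⟩
  have hT0bdd : BddAbove T0 := ⟨1, fun t ht => ht.1.2⟩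
  set ts := sSup T0 with htsdef
  have htsmem : ts ∈ Set.Icc (0:ℝ) 1 :=
    ⟨le_csSup hT0bdd h0T0, csSup_le hT0ne fun t ht => ht.1.2⟩
  rcases hcover ts htsmem with hts0 | hts1
  · -- ts ∈ T0 : approach from the right within T1
    have hts1' : ts < 1 := by
      rcases eq_or_lt_of_le htsmem.2 with he | h
      · exact absurd h1T1 (fun h => hdisjT 1 (he ▸ hts0) h)
      · exact h
    have hseq : ∀ k : ℕ, ∃ x, x ∈ X ∧ c ≤ f x (ts + (1 - ts)/(k+2)) ∧ f x 0 < β := by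
      intro k
      have hd : (0:ℝ) < (1 - ts)/(k+2) := div_pos (by linarith) (by positivity)
      have hle : (1 - ts)/(k+2) ≤ 1 - ts := by
        apply div_le_self (by linarith)
        have : (0:ℝ) ≤ (k:ℝ) := Nat.cast_nonneg k
        linarith
      have hsI : ts + (1 - ts)/(k+2) ∈ Set.Icc (0:ℝ) 1 :=
        ⟨by linarith [htsmem.1], by linarith⟩
      have hnot : ts + (1 - ts)/(k+2) ∉ T0 := fun h =>
        absurd (le_csSup hT0bdd h) (by linarith)
      rcases hcover _ hsI with h | h
      · exact absurd h hnot
      · exact h.2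
    choose xs hxsX hxsc hxs0 using hseq
    obtain ⟨xl, hxlX, φ, hφ, hφt⟩ := hXc.tendsto_subseq hxsX
    have hstend : Filter.Tendsto (fun k : ℕ => ts + (1 - ts)/(φ k + 2)) Filter.atTop (nhds ts) := by
      have h1 : Filter.Tendsto (fun k : ℕ => ((φ k : ℝ) + 2)) Filter.atTop Filter.atTop := by
        apply Filter.tendsto_atTop_add_const_right
        exact tendsto_natCast_atTop_atTop.comp hφ.tendsto_atTop
      have h2 : Filter.Tendsto (fun k : ℕ => (1 - ts)/((φ k : ℝ) + 2)) Filter.atTop (nhds 0) :=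
        Filter.Tendsto.div_atTop tendsto_const_nhds h1
      simpa using tendsto_const_nhds.add h2
    have hjoint : Filter.Tendsto (fun k => f (xs (φ k)) (ts + (1 - ts)/(φ k + 2)))
        Filter.atTop (nhds (f xl ts)) :=
      (hcont.tendsto (xl, ts)).comp (hφt.prodMk_nhds hstend)
    have hlc : c ≤ f xl ts :=
      ge_of_tendsto hjoint (Filter.Eventually.of_forall fun k => hxsc (φ k))
    have hl0 : f xl 0 ≤ β :=
      le_of_tendsto (((hcx 0).tendsto xl).comp hφt)
        (Filter.Eventually.of_forall fun k => (hxs0 (φ k)).le)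
    rcases key ts htsmem with hk | hk
    · obtain ⟨-, x0', hx0'X, hx0'c, hx0'1⟩ := hts0
      have h0 := hk x0' hx0'X hx0'c
      have := chord (hconv x0' hx0'X) htsmem
      nlinarith [htsmem.1, htsmem.2]
    · have h1 := hk xl hxlX hlc
      have := chord (hconv xl hxlX) htsmem
      nlinarith [htsmem.1, htsmem.2]
  · -- ts ∈ T1 : approach from the left within T0
    have hts0' : 0 < ts := by
      rcases eq_or_lt_of_le htsmem.1 with he | h
      · exact absurd hts1 (fun h => hdisjT 0 h0T0 (he ▸ h))
      · exact h
    have hseq : ∀ k : ℕ, ∃ x, x ∈ X ∧ c ≤ f x (ts - ts/(k+2)) ∧ f x 1 < β := by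
      intro k
      have hd : (0:ℝ) < ts/(k+2) := div_pos hts0' (by positivity)
      have hlt : ts - ts/(k+2) < ts := by linarith
      obtain ⟨u, huT0, hu⟩ := exists_lt_of_lt_csSup hT0ne hlt
      -- downward closure: ts - ts/(k+2) ∈ T0
      obtain ⟨huI, x, hxX, hxc, hx1⟩ := huT0
      have hsI : ts - ts/(k+2) ∈ Set.Icc (0:ℝ) 1 := by
        constructor
        · have : ts/(k+2) ≤ ts := by
            apply div_le_self hts0'.le
            have : (0:ℝ) ≤ (k:ℝ) := Nat.cast_nonneg k
            linarith
          linarith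
        · linarith [htsmem.2]
      refine ⟨x, hxX, ?_, hx1⟩
      exact convex_push' (hconv x hxX) hsI.1 hu.le (by linarith [huI.2] : u ≤ 1) le_rfl
        (by linarith) hxc
    choose xs hxsX hxsc hxs1 using hseq
    obtain ⟨xl, hxlX, φ, hφ, hφt⟩ := hXc.tendsto_subseq hxsX
    have hstend : Filter.Tendsto (fun k : ℕ => ts - ts/(φ k + 2)) Filter.atTop (nhds ts) := by
      have h1 : Filter.Tendsto (fun k : ℕ => ((φ k : ℝ) + 2)) Filter.atTop Filter.atTop := by
        apply Filter.tendsto_atTop_add_const_right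
        exact tendsto_natCast_atTop_atTop.comp hφ.tendsto_atTop
      have h2 : Filter.Tendsto (fun k : ℕ => ts/((φ k : ℝ) + 2)) Filter.atTop (nhds 0) :=
        Filter.Tendsto.div_atTop tendsto_const_nhds h1
      simpa using tendsto_const_nhds.sub h2
    have hjoint : Filter.Tendsto (fun k => f (xs (φ k)) (ts - ts/(φ k + 2)))
        Filter.atTop (nhds (f xl ts)) :=
      (hcont.tendsto (xl, ts)).comp (hφt.prodMk_nhds hstend)
    have hlc : c ≤ f xl ts :=
      ge_of_tendsto hjoint (Filter.Eventually.of_forall fun k => hxsc (φ k))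
    have hl1 : f xl 1 ≤ β :=
      le_of_tendsto (((hcx 1).tendsto xl).comp hφt)
        (Filter.Eventually.of_forall fun k => (hxs1 (φ k)).le)
    rcases key ts htsmem with hk | hk
    · have h0 := hk xl hxlX hlc
      have := chord (hconv xl hxlX) htsmem
      nlinarith [htsmem.1, htsmem.2]
    · obtain ⟨-, x1', hx1'X, hx1'c, hx1'0⟩ := hts1
      have h1 := hk x1' hx1'X hx1'c
      have := chord (hconv x1' hx1'X) htsmem
      nlinarith [htsmem.1, htsmem.2]

private lemma kneser_list {n m : Type*} [Fintype n] [Fintype m]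
    (S : Set (n → ℝ)) (Y : Set (m → ℝ)) (hY : Convex ℝ Y) (hYne : Y.Nonempty)
    (f : (n → ℝ) → (m → ℝ) → ℝ)
    (hcont : Continuous fun p : (n → ℝ) × (m → ℝ) => f p.1 p.2)
    (hconc : ∀ y ∈ Y, ConcaveOn ℝ S (fun x => f x y))
    (hconv : ∀ x ∈ S, ConvexOn ℝ Y (f x))
    (c : ℝ) :
    ∀ L : List (m → ℝ), (∀ y ∈ L, y ∈ Y) →
      ∀ X : Set (n → ℝ), X ⊆ S → IsCompact X → Convex ℝ X →
      (∀ x ∈ X, ∃ y ∈ L, f x y < c) → ∃ y ∈ Y, ∀ x ∈ X, f x y < c := by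
  have hcxy : ∀ y : (m → ℝ), Continuous fun x => f x y := fun y =>
    hcont.comp (continuous_id.prodMk continuous_const)
  intro L
  induction L with
  | nil =>
    intro _ X _ _ _ hx
    obtain ⟨y0, hy0⟩ := hYne
    exact ⟨y0, hy0, fun x hx' => absurd (hx x hx') (by simp)⟩
  | cons y0 L ih =>
    intro hL X hXS hXc hXv hx
    have hy0Y : y0 ∈ Y := hL y0 List.mem_cons_self
    set X0 := X ∩ {x | c ≤ f x y0} with hX0def
    have hX0S : X0 ⊆ S := fun x hx => hXS hx.1
    have hX0c : IsCompact X0 := hXc.inter_right (isClosed_le continuous_const (hcxy y0))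
    have hX0v : Convex ℝ X0 := by
      intro x hx y hy a b ha hb hab
      refine ⟨hXv hx.1 hy.1 ha hb hab, ?_⟩
      have h := (hconc y0 hy0Y).2 (hXS hx.1) (hXS hy.1) ha hb hab
      simp only [smul_eq_mul] at h
      have h1 : a * c ≤ a * f x y0 := mul_le_mul_of_nonneg_left hx.2 ha
      have h2 : b * c ≤ b * f y y0 := mul_le_mul_of_nonneg_left hy.2 hb
      have habc : a * c + b * c = c := by rw [← add_mul, hab, one_mul]
      simp only [Set.mem_setOf_eq]
      linarith
    obtain ⟨y', hy'Y, hy'⟩ := ih (fun y hy => hL y (List.mem_cons_of_mem _ hy)) X0 hX0S hX0c hX0v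
      (by
        rintro x ⟨hxX, hxc⟩
        obtain ⟨y, hyL, hfy⟩ := hx x hxX
        rcases List.mem_cons.mp hyL with rfl | hyL
        · exact absurd hfy (not_lt.mpr hxc)
        · exact ⟨y, hyL, hfy⟩)
    -- combine y' and y0 along a segment
    have hlin : ∀ t : ℝ, AffineMap.lineMap y' y0 t = (1 - t) • y' + t • y0 := by
      intro t
      simp only [AffineMap.lineMap_apply, vsub_eq_sub, vadd_eq_add]
      rw [smul_sub, sub_smul, one_smul]
      abel
    have hpathY : ∀ t ∈ Set.Icc (0:ℝ) 1, AffineMap.lineMap y' y0 t ∈ Y := by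
      intro t ht
      rw [hlin]
      exact hY hy'Y hy0Y (by linarith [ht.2]) ht.1 (by ring)
    have hpathcont : Continuous fun t : ℝ => AffineMap.lineMap y' y0 t := by
      simp only [AffineMap.lineMap_apply, vsub_eq_sub, vadd_eq_add]
      exact (continuous_id.smul continuous_const).add continuous_const
    obtain ⟨t, htI, htall⟩ := kneser_pair hXc (fun x t => f x (AffineMap.lineMap y' y0 t))
      (hcont.comp (continuous_fst.prodMk (hpathcont.comp continuous_snd)))
      (by
        intro t ht
        intro x hx y hy a b ha hb hab
        refine ⟨hXv hx.1 hy.1 ha hb hab, ?_⟩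
        have h := (hconc _ (hpathY t ht)).2 (hXS hx.1) (hXS hy.1) ha hb hab
        simp only [smul_eq_mul] at h
        have h1 : a * c ≤ a * f x (AffineMap.lineMap y' y0 t) := mul_le_mul_of_nonneg_left hx.2 ha
        have h2 : b * c ≤ b * f y (AffineMap.lineMap y' y0 t) := mul_le_mul_of_nonneg_left hy.2 hb
        have habc : a * c + b * c = c := by rw [← add_mul, hab, one_mul]
        linarith)
      (by
        intro x hxX
        exact ((hconv x (hXS hxX)).comp_affineMap (AffineMap.lineMap y' y0)).subset
          (fun t ht => hpathY t ht) (convex_Icc 0 1))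
      (by
        intro x hxX
        by_cases h : c ≤ f x y0
        · left
          have := hy' x ⟨hxX, h⟩
          simpa [AffineMap.lineMap_apply] using this
        · right
          simpa [AffineMap.lineMap_apply] using not_le.mp h)
    exact ⟨_, hpathY t htI, htall⟩

private lemma exists_bounds {n m : Type*} [Fintype n] [Fintype m]
    (f : (n → ℝ) → (m → ℝ) → ℝ)
    (hcont : Continuous fun p : (n → ℝ) × (m → ℝ) => f p.1 p.2) :
    ∃ lb ub : ℝ, ∀ (μ : stdSimplex ℝ n) (ν : stdSimplex ℝ m),
      lb ≤ f μ.1 ν.1 ∧ f μ.1 ν.1 ≤ ub := by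
  haveI : CompactSpace (stdSimplex ℝ n) := isCompact_iff_compactSpace.mp (isCompact_stdSimplex ℝ n)
  haveI : CompactSpace (stdSimplex ℝ m) := isCompact_iff_compactSpace.mp (isCompact_stdSimplex ℝ m)
  have hg : Continuous fun p : stdSimplex ℝ n × stdSimplex ℝ m => f p.1.1 p.2.1 :=
    hcont.comp ((continuous_subtype_val.comp continuous_fst).prodMk
      (continuous_subtype_val.comp continuous_snd))
  have hc := isCompact_range hg
  obtain ⟨lb, hlb⟩ := hc.bddBelow
  obtain ⟨ub, hub⟩ := hc.bddAbove
  exact ⟨lb, ub, fun μ ν => ⟨hlb ⟨(μ, ν), rfl⟩, hub ⟨(μ, ν), rfl⟩⟩⟩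

private lemma ciInf_neg' {ι : Sort*} [Nonempty ι] (f : ι → ℝ) (h : BddAbove (Set.range f)) :
    (⨅ i, -f i) = -(⨆ i, f i) := by
  apply le_antisymm
  · rw [le_neg]
    apply ciSup_le
    intro i
    rw [le_neg]
    exact ciInf_le (by
      obtain ⟨ub, hub⟩ := h
      exact ⟨-ub, by rintro _ ⟨j, rfl⟩; exact neg_le_neg (hub ⟨j, rfl⟩)⟩) i
  · apply le_ciInf
    intro i
    exact neg_le_neg (le_ciSup h i)

private lemma ciSup_neg' {ι : Sort*} [Nonempty ι] (f : ι → ℝ) (h : BddBelow (Set.range f)) :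
    (⨆ i, -f i) = -(⨅ i, f i) := by
  have := ciInf_neg' (fun i => -f i) (by
    obtain ⟨lb, hlb⟩ := h
    exact ⟨-lb, by rintro _ ⟨j, rfl⟩; exact neg_le_neg (hlb ⟨j, rfl⟩)⟩)
  simp only [neg_neg] at this
  linarith

private lemma minimax_aux {n m : Type*} [Fintype n] [Fintype m] [Nonempty n] [Nonempty m]
    (f : (n → ℝ) → (m → ℝ) → ℝ)
    (hcont : Continuous fun p : (n → ℝ) × (m → ℝ) => f p.1 p.2)
    (hconc : ∀ y ∈ stdSimplex ℝ m, ConcaveOn ℝ (stdSimplex ℝ n) (fun x => f x y))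
    (hconv : ∀ x ∈ stdSimplex ℝ n, ConvexOn ℝ (stdSimplex ℝ m) (f x)) :
    (⨅ ν : stdSimplex ℝ m, ⨆ μ : stdSimplex ℝ n, f μ.1 ν.1) ≤
      ⨆ μ : stdSimplex ℝ n, ⨅ ν : stdSimplex ℝ m, f μ.1 ν.1 := by
  classical
  haveI : Nonempty (stdSimplex ℝ n) :=
    ⟨⟨Pi.single (Classical.arbitrary n) 1, single_mem_stdSimplex ℝ _⟩⟩
  haveI : Nonempty (stdSimplex ℝ m) :=
    ⟨⟨Pi.single (Classical.arbitrary m) 1, single_mem_stdSimplex ℝ _⟩⟩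
  obtain ⟨lb, ub, hb⟩ := exists_bounds f hcont
  have hbbi : ∀ μ : stdSimplex ℝ n, BddBelow (Set.range fun ν : stdSimplex ℝ m => f μ.1 ν.1) :=
    fun μ => ⟨lb, by rintro _ ⟨ν, rfl⟩; exact (hb μ ν).1⟩
  have hbas : ∀ ν : stdSimplex ℝ m, BddAbove (Set.range fun μ : stdSimplex ℝ n => f μ.1 ν.1) :=
    fun ν => ⟨ub, by rintro _ ⟨μ, rfl⟩; exact (hb μ ν).2⟩
  have hbaiSup : BddAbove (Set.range fun μ : stdSimplex ℝ n => ⨅ ν : stdSimplex ℝ m, f μ.1 ν.1) := by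
    refine ⟨ub, ?_⟩
    rintro _ ⟨μ, rfl⟩
    exact le_trans (ciInf_le (hbbi μ) (Classical.arbitrary _)) (hb μ _).2
  have hbbInf : BddBelow (Set.range fun ν : stdSimplex ℝ m => ⨆ μ : stdSimplex ℝ n, f μ.1 ν.1) := by
    refine ⟨lb, ?_⟩
    rintro _ ⟨ν, rfl⟩
    exact le_trans (hb (Classical.arbitrary _) ν).1 (le_ciSup (hbas ν) (Classical.arbitrary _))
  set v := ⨆ μ : stdSimplex ℝ n, ⨅ ν : stdSimplex ℝ m, f μ.1 ν.1 with hv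
  have hmain : ∀ c, v < c → (⨅ ν : stdSimplex ℝ m, ⨆ μ : stdSimplex ℝ n, f μ.1 ν.1) ≤ c := by
    intro c hcv
    have hex : ∀ x ∈ stdSimplex ℝ n, ∃ ν : stdSimplex ℝ m, f x ν.1 < c := by
      intro x hx
      have h1 : (⨅ ν : stdSimplex ℝ m, f (⟨x, hx⟩ : stdSimplex ℝ n).1 ν.1) ≤ v :=
        le_ciSup hbaiSup ⟨x, hx⟩
      exact exists_lt_of_ciInf_lt (lt_of_le_of_lt h1 hcv)
    obtain ⟨t, ht⟩ := (isCompact_stdSimplex ℝ n).elim_finite_subcover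
      (fun ν : stdSimplex ℝ m => {x | f x ν.1 < c})
      (fun ν => isOpen_lt (hcont.comp (continuous_id.prodMk continuous_const)) continuous_const)
      (fun x hx => by
        obtain ⟨ν, hν⟩ := hex x hx
        exact Set.mem_iUnion.mpr ⟨ν, hν⟩)
    set L : List (m → ℝ) := t.toList.map (fun ν => ν.1) with hLdef
    have hLY : ∀ y ∈ L, y ∈ stdSimplex ℝ m := by
      intro y hy
      rw [hLdef, List.mem_map] at hy
      obtain ⟨ν, -, rfl⟩ := hy
      exact ν.2
    have hcov : ∀ x ∈ stdSimplex ℝ n, ∃ y ∈ L, f x y < c := by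
      intro x hx
      have hmem := ht hx
      rw [Set.mem_iUnion₂] at hmem
      obtain ⟨ν, hνt, hνx⟩ := hmem
      exact ⟨ν.1, by rw [hLdef, List.mem_map]; exact ⟨ν, Finset.mem_toList.mpr hνt, rfl⟩, hνx⟩
    obtain ⟨y, hyY, hy⟩ := kneser_list (stdSimplex ℝ n) (stdSimplex ℝ m)
      (convex_stdSimplex ℝ m) ⟨_, (Classical.arbitrary (stdSimplex ℝ m)).2⟩ f hcont hconc hconv c
      L hLY (stdSimplex ℝ n) subset_rfl (isCompact_stdSimplex ℝ n) (convex_stdSimplex ℝ n) hcov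
    have h2 : (⨆ μ : stdSimplex ℝ n, f μ.1 y) ≤ c := ciSup_le fun μ => (hy μ.1 μ.2).le
    exact le_trans (ciInf_le hbbInf ⟨y, hyY⟩) h2
  by_contra hcon
  push_neg at hcon
  obtain ⟨c, hc1, hc2⟩ := exists_between hcon
  exact absurd (hmain c hc1) (not_le.mpr hc2)


private lemma entropy_eq {A : Type*} [Fintype A] (μ : A → ℝ) :
    entropy μ = ∑ a, Real.negMulLog (μ a) := by
  unfold entropy
  rw [← Finset.sum_neg_distrib]
  exact Finset.sum_congr rfl fun a _ => by rw [Real.negMulLog]; ring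

private lemma entropy_continuous {A : Type*} [Fintype A] :
    Continuous (entropy (A := A)) := by
  unfold entropy
  exact (continuous_finset_sum _ fun a _ =>
    Real.continuous_mul_log.comp (continuous_apply a)).neg

private lemma entropy_concave {A : Type*} [Fintype A] :
    ConcaveOn ℝ (stdSimplex ℝ A) (entropy (A := A)) := by
  refine ⟨convex_stdSimplex ℝ A, ?_⟩
  intro x hx y hy a b ha hb hab
  simp only [smul_eq_mul, entropy_eq, Finset.mul_sum, ← Finset.sum_add_distrib]
  apply Finset.sum_le_sum
  intro i _
  have h := Real.concaveOn_negMulLog.2 (Set.mem_Ici.mpr (hx.1 i)) (Set.mem_Ici.mpr (hy.1 i))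
    ha hb hab
  simpa [smul_eq_mul] using h

private lemma pay_left_lin {A B : Type*} [Fintype A] [Fintype B] (R : A → B → ℝ)
    (μ1 μ2 : A → ℝ) (ν : B → ℝ) (a b : ℝ) :
    pay R (a • μ1 + b • μ2) ν = a * pay R μ1 ν + b * pay R μ2 ν := by
  unfold pay
  rw [Finset.mul_sum, Finset.mul_sum, ← Finset.sum_add_distrib]
  refine Finset.sum_congr rfl fun x _ => ?_
  rw [Finset.mul_sum, Finset.mul_sum, ← Finset.sum_add_distrib]
  refine Finset.sum_congr rfl fun y _ => ?_
  simp only [Pi.add_apply, Pi.smul_apply, smul_eq_mul]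
  ring

private lemma pay_right_lin {A B : Type*} [Fintype A] [Fintype B] (R : A → B → ℝ)
    (μ : A → ℝ) (ν1 ν2 : B → ℝ) (a b : ℝ) :
    pay R μ (a • ν1 + b • ν2) = a * pay R μ ν1 + b * pay R μ ν2 := by
  unfold pay
  rw [Finset.mul_sum, Finset.mul_sum, ← Finset.sum_add_distrib]
  refine Finset.sum_congr rfl fun x _ => ?_
  rw [Finset.mul_sum, Finset.mul_sum, ← Finset.sum_add_distrib]
  refine Finset.sum_congr rfl fun y _ => ?_
  simp only [Pi.add_apply, Pi.smul_apply, smul_eq_mul]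
  ring

private lemma pay_continuous {A B : Type*} [Fintype A] [Fintype B] (R : A → B → ℝ) :
    Continuous fun p : (A → ℝ) × (B → ℝ) => pay R p.1 p.2 := by
  unfold pay
  exact continuous_finset_sum _ fun a _ => continuous_finset_sum _ fun b _ =>
    (((continuous_apply a).comp continuous_fst).mul continuous_const).mul
      ((continuous_apply b).comp continuous_snd)

private lemma pay_add_pay {A B : Type*} [Fintype A] [Fintype B] (R1 : A → B → ℝ)
    (R2 : B → A → ℝ) (x : A → ℝ) (y : B → ℝ) :
    pay R1 x y + pay R2 y x = pay (fun a b => R1 a b + R2 b a) x y := by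
  unfold pay
  rw [Finset.sum_comm (f := fun b a => y b * R2 b a * x a), ← Finset.sum_add_distrib]
  refine Finset.sum_congr rfl fun a _ => ?_
  rw [← Finset.sum_add_distrib]
  refine Finset.sum_congr rfl fun b _ => by ring

private lemma pay_le_matMaxNorm {A B : Type*} [Fintype A] [Fintype B] [Nonempty A] [Nonempty B]
    (M : A → B → ℝ) {x : A → ℝ} {y : B → ℝ}
    (hx : x ∈ stdSimplex ℝ A) (hy : y ∈ stdSimplex ℝ B) :
    pay M x y ≤ matMaxNorm M := by
  calc pay M x y ≤ ∑ a, ∑ b, x a * matMaxNorm M * y b := by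
        refine Finset.sum_le_sum fun a _ => Finset.sum_le_sum fun b _ => ?_
        have hM : M a b ≤ matMaxNorm M :=
          (le_abs_self _).trans (Finset.le_sup' (fun ab => |M ab.1 ab.2|) (Finset.mem_univ (a, b)))
        exact mul_le_mul_of_nonneg_right (mul_le_mul_of_nonneg_left hM (hx.1 a)) (hy.1 b)
    _ = ∑ a, x a * matMaxNorm M := by
        refine Finset.sum_congr rfl fun a _ => ?_
        rw [← Finset.mul_sum, hy.2, mul_one]
    _ = matMaxNorm M := by rw [← Finset.sum_mul, hx.2, one_mul]

private lemma matMaxNorm_nonneg {A B : Type*} [Fintype A] [Fintype B] [Nonempty A] [Nonempty B]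
    (M : A → B → ℝ) : 0 ≤ matMaxNorm M := by
  obtain ⟨ab⟩ : Nonempty (A × B) := inferInstance
  exact le_trans (abs_nonneg (M ab.1 ab.2))
    (Finset.le_sup' (fun ab => |M ab.1 ab.2|) (Finset.mem_univ ab))

theorem stmt_9 {A1 A2 : Type*} [Fintype A1] [Fintype A2] [Nonempty A1] [Nonempty A2]
    (R1 : A1 → A2 → ℝ) (R2 : A2 → A1 → ℝ) (τ1 τ2 : ℝ) (hτ1 : 0 ≤ τ1) (hτ2 : 0 ≤ τ2)
    (lam : ℝ) (hlam : 1 < lam)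
    (c : ℝ)
    (hc : c = lam * matMaxNorm (fun a b => R1 a b + R2 b a)
        - (regVal τ1 τ2 R1 + regVal τ2 τ1 R2)) :
    ((lam - 1) * matMaxNorm (fun a b => R1 a b + R2 b a) ≤ c ∧
      0 ≤ (lam - 1) * matMaxNorm (fun a b => R1 a b + R2 b a)) ∧
    (c = 0 ↔ matMaxNorm (fun a b => R1 a b + R2 b a) = 0) := by
  classical
  set N := matMaxNorm (fun a b => R1 a b + R2 b a) with hNdef
  set F : (A1 → ℝ) → (A2 → ℝ) → ℝ :=
    fun x y => pay R1 x y + τ1 * entropy x - τ2 * entropy y with hFdef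
  set G : (A2 → ℝ) → (A1 → ℝ) → ℝ :=
    fun y x => pay R2 y x + τ2 * entropy y - τ1 * entropy x with hGdef
  have hFcont : Continuous fun p : (A1 → ℝ) × (A2 → ℝ) => F p.1 p.2 := by
    rw [hFdef]
    exact ((pay_continuous R1).add
      (continuous_const.mul (entropy_continuous.comp continuous_fst))).sub
      (continuous_const.mul (entropy_continuous.comp continuous_snd))
  have hGcont : Continuous fun p : (A2 → ℝ) × (A1 → ℝ) => G p.1 p.2 := by
    rw [hGdef]
    exact ((pay_continuous R2).add
      (continuous_const.mul (entropy_continuous.comp continuous_fst))).sub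
      (continuous_const.mul (entropy_continuous.comp continuous_snd))
  obtain ⟨lb1, ub1, hb1⟩ := exists_bounds F hFcont
  obtain ⟨lb2, ub2, hb2⟩ := exists_bounds G hGcont
  have hreg1 : regVal τ1 τ2 R1 = ⨆ μ : stdSimplex ℝ A1, ⨅ ν : stdSimplex ℝ A2, F μ.1 ν.1 := rfl
  have hreg2 : regVal τ2 τ1 R2 = ⨆ ν : stdSimplex ℝ A2, ⨅ μ : stdSimplex ℝ A1, G ν.1 μ.1 := rfl
  have hN0 : 0 ≤ N := matMaxNorm_nonneg _
  -- weak duality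
  have hkey : ∀ (μ : stdSimplex ℝ A1) (ν : stdSimplex ℝ A2), F μ.1 ν.1 + G ν.1 μ.1 ≤ N := by
    intro μ ν
    have h := pay_add_pay R1 R2 μ.1 ν.1
    have h2 := pay_le_matMaxNorm (fun a b => R1 a b + R2 b a) μ.2 ν.2
    simp only [hFdef, hGdef]
    rw [hNdef]
    linarith
  have hwd : regVal τ1 τ2 R1 + regVal τ2 τ1 R2 ≤ N := by
    rw [hreg1, hreg2]
    have h1 : (⨆ μ : stdSimplex ℝ A1, ⨅ ν : stdSimplex ℝ A2, F μ.1 ν.1) ≤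
        N - (⨆ ν : stdSimplex ℝ A2, ⨅ μ : stdSimplex ℝ A1, G ν.1 μ.1) := by
      apply ciSup_le
      intro μ
      rw [le_sub_comm]
      apply ciSup_le
      intro ν
      have hF : (⨅ ν' : stdSimplex ℝ A2, F μ.1 ν'.1) ≤ F μ.1 ν.1 :=
        ciInf_le ⟨lb1, by rintro _ ⟨ν', rfl⟩; exact (hb1 μ ν').1⟩ ν
      have hG : (⨅ μ' : stdSimplex ℝ A1, G ν.1 μ'.1) ≤ G ν.1 μ.1 :=
        ciInf_le ⟨lb2, by rintro _ ⟨μ', rfl⟩; exact (hb2 ν μ').1⟩ μ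
      have := hkey μ ν
      linarith
    linarith
  have hmain : (lam - 1) * N ≤ c := by
    rw [hc]
    have heq : (lam - 1) * N = lam * N - N := by ring
    linarith
  have hpos : 0 ≤ (lam - 1) * N := mul_nonneg (by linarith) hN0
  refine ⟨⟨hmain, hpos⟩, ?_, ?_⟩
  · -- c = 0 → N = 0
    intro h0
    have h1 : (lam - 1) * N = 0 := le_antisymm (h0 ▸ hmain) hpos
    rcases mul_eq_zero.mp h1 with h | h
    · exact absurd h (by intro h'; linarith)
    · exact h
  · -- N = 0 → c = 0
    intro hN
    have hM0 : ∀ a b, R1 a b + R2 b a = 0 := by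
      intro a b
      have h1 : |R1 a b + R2 b a| ≤ N :=
        Finset.le_sup' (fun ab : A1 × A2 => |R1 ab.1 ab.2 + R2 ab.2 ab.1|) (Finset.mem_univ (a, b))
      have h2 := abs_nonneg (R1 a b + R2 b a)
      rw [hN] at h1
      exact abs_eq_zero.mp (le_antisymm h1 h2)
    have hGF : ∀ (y : A2 → ℝ) (x : A1 → ℝ), G y x = -F x y := by
      intro y x
      have h := pay_add_pay R1 R2 x y
      have h2 : pay (fun a b => R1 a b + R2 b a) x y = 0 := by
        unfold pay
        apply Finset.sum_eq_zero
        intro a _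
        apply Finset.sum_eq_zero
        intro b _
        simp [hM0 a b]
      simp only [hFdef, hGdef]
      linarith
    -- concavity and convexity of F
    have hFconc : ∀ y ∈ stdSimplex ℝ A2, ConcaveOn ℝ (stdSimplex ℝ A1) (fun x => F x y) := by
      intro y _
      refine ⟨convex_stdSimplex ℝ A1, ?_⟩
      intro x hx x' hx' a b ha hb hab
      have hpay := pay_left_lin R1 x x' y a b
      have hent := entropy_concave.2 hx hx' ha hb hab
      simp only [smul_eq_mul] at hent ⊢
      simp only [hFdef]
      have h1 : τ1 * (a * entropy x + b * entropy x') ≤ τ1 * entropy (a • x + b • x') :=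
        mul_le_mul_of_nonneg_left hent hτ1
      have h2 : a * (τ2 * entropy y) + b * (τ2 * entropy y) = τ2 * entropy y := by
        rw [← add_mul, hab, one_mul]
      linarith [hpay]
    have hFconv : ∀ x ∈ stdSimplex ℝ A1, ConvexOn ℝ (stdSimplex ℝ A2) (F x) := by
      intro x _
      refine ⟨convex_stdSimplex ℝ A2, ?_⟩
      intro y hy y' hy' a b ha hb hab
      have hpay := pay_right_lin R1 x y y' a b
      have hent := entropy_concave.2 hy hy' ha hb hab
      simp only [smul_eq_mul] at hent ⊢
      simp only [hFdef]
      have h1 : τ2 * (a * entropy y + b * entropy y') ≤ τ2 * entropy (a • y + b • y') :=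
        mul_le_mul_of_nonneg_left hent hτ2
      have h2 : a * (τ1 * entropy x) + b * (τ1 * entropy x) = τ1 * entropy x := by
        rw [← add_mul, hab, one_mul]
      linarith [hpay]
    have hmm := minimax_aux F hFcont hFconc hFconv
    -- rewrite regVal2 as -(inf sup)
    have hreg2' : regVal τ2 τ1 R2 =
        -(⨅ ν : stdSimplex ℝ A2, ⨆ μ : stdSimplex ℝ A1, F μ.1 ν.1) := by
      rw [hreg2]
      have e1 : ∀ ν : stdSimplex ℝ A2,
          (⨅ μ : stdSimplex ℝ A1, G ν.1 μ.1) = -(⨆ μ : stdSimplex ℝ A1, F μ.1 ν.1) := by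
        intro ν
        have : (fun μ : stdSimplex ℝ A1 => G ν.1 μ.1) = fun μ => -(F μ.1 ν.1) :=
          funext fun μ => hGF ν.1 μ.1
        rw [iInf_congr (fun μ => by rw [hGF ν.1 μ.1])]
        exact ciInf_neg' (fun μ : stdSimplex ℝ A1 => F μ.1 ν.1)
          ⟨ub1, by rintro _ ⟨μ, rfl⟩; exact (hb1 μ ν).2⟩
      rw [iSup_congr e1]
      apply ciSup_neg'
      refine ⟨lb1, ?_⟩
      rintro _ ⟨ν, rfl⟩
      exact le_trans (hb1 (Classical.arbitrary _) ν).1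
        (le_ciSup ⟨ub1, by rintro _ ⟨μ, rfl⟩; exact (hb1 μ ν).2⟩ (Classical.arbitrary _))
    have hge : 0 ≤ regVal τ1 τ2 R1 + regVal τ2 τ1 R2 := by
      rw [hreg1, hreg2']
      linarith [hmm]
    rw [hc, hN]
    have : regVal τ1 τ2 R1 + regVal τ2 τ1 R2 = 0 := le_antisymm (hN ▸ hwd) hge
    rw [this]
    ring
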